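/- Let V be a finite set of cardinality n, r ≤ n a positive integer, and T = {X_1, ..., X_k} a sequence of subsets of V. For i = 0,...,k let T_i = {X_1,...,X_i}. Suppose that for every i = 0,...,k-1 there is a block A of atoms(T_i) that is split in atoms(T_{i+1}) into two sets each of cardinality at least r. Then k ≤ n/r - 1. -/

import Mathlib

/-- `u` and `v` lie in the same atom of the family `T` of subsets of `V`. -/
def sameAtom {V : Type*} (T : Set (Set V)) (u v : V) : Prop :=
  ∀ X ∈ T, (u ∈ X ↔ v ∈ X)

/-- The family `T_i = {X_1, …, X_i}` of the first `i` sets of the sequence `X`. -/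
def famUpTo {V : Type*} {k : ℕ} (X : Fin k → Set V) (i : ℕ) : Set (Set V) :=
  {Y | ∃ j : Fin k, (j : ℕ) < i ∧ Y = X j}

lemma sameAtom_mono' {V : Type*} {T T' : Set (Set V)} (h : T ⊆ T') {u v : V}
    (H : sameAtom T' u v) : sameAtom T u v := fun X hX => H X (h hX)

lemma famUpTo_mono' {V : Type*} {k : ℕ} (X : Fin k → Set V) {i j : ℕ} (h : i ≤ j) :
    famUpTo X i ⊆ famUpTo X j := by
  rintro Y ⟨m, hm, rfl⟩
  exact ⟨m, lt_of_lt_of_le hm h, rfl⟩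

lemma sameAtom_symm' {V : Type*} {T : Set (Set V)} {u v : V} (h : sameAtom T u v) :
    sameAtom T v u := fun X hX => (h X hX).symm

lemma sameAtom_trans' {V : Type*} {T : Set (Set V)} {u v w : V} (h1 : sameAtom T u v)
    (h2 : sameAtom T v w) : sameAtom T u w := fun X hX => (h1 X hX).trans (h2 X hX)

lemma key_family {V : Type*} [Fintype V] {r k : ℕ} (hr : 1 ≤ r) (hrn : r ≤ Fintype.card V)
    (X : Fin k → Set V)
    (hsplit : ∀ i : Fin k, ∃ u v : V,
      sameAtom (famUpTo X i) u v ∧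
      ¬ sameAtom (famUpTo X ((i : ℕ) + 1)) u v ∧
      r ≤ Set.ncard {z : V | sameAtom (famUpTo X ((i : ℕ) + 1)) u z} ∧
      r ≤ Set.ncard {z : V | sameAtom (famUpTo X ((i : ℕ) + 1)) v z}) :
    ∀ i, i ≤ k → ∃ F : Finset (Set V), F.card = i + 1 ∧
      (↑F : Set (Set V)).PairwiseDisjoint id ∧
      ∀ D ∈ F, r ≤ D.ncard ∧ ∀ x y : V, sameAtom (famUpTo X i) x y → x ∈ D → y ∈ D := by
  classical
  intro i
  induction i with
  | zero =>
    intro _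
    refine ⟨{Set.univ}, by simp, by simp, ?_⟩
    intro D hD
    simp only [Finset.mem_singleton] at hD; subst hD
    exact ⟨by simpa [Set.ncard_univ] using hrn, fun x y _ _ => trivial⟩
  | succ i ih =>
    intro hik
    obtain ⟨F, hcard, hdisj, hF⟩ := ih (Nat.le_of_succ_le hik)
    obtain ⟨u, v, huv, hne, hu, hv⟩ := hsplit ⟨i, hik⟩
    simp only [Fin.val_mk] at huv hne hu hv
    set A := {z : V | sameAtom (famUpTo X (i + 1)) u z} with hA
    set B := {z : V | sameAtom (famUpTo X (i + 1)) v z} with hB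
    have hAu : u ∈ A := fun Y _ => Iff.rfl
    have hBv : v ∈ B := fun Y _ => Iff.rfl
    have hABdisj : Disjoint A B := by
      rw [Set.disjoint_left]
      intro z hzA hzB
      exact hne (sameAtom_trans' hzA (sameAtom_symm' hzB))
    have hmono : famUpTo X i ⊆ famUpTo X (i + 1) := famUpTo_mono' X (Nat.le_succ i)
    have hAsub : ∀ z ∈ A, sameAtom (famUpTo X i) u z := fun z hz => sameAtom_mono' hmono hz
    have hBsub : ∀ z ∈ B, sameAtom (famUpTo X i) u z := fun z hz =>
      sameAtom_trans' huv (sameAtom_mono' hmono hz)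
    have satA : ∀ x y : V, sameAtom (famUpTo X (i + 1)) x y → x ∈ A → y ∈ A :=
      fun x y hxy hx => sameAtom_trans' hx hxy
    have satB : ∀ x y : V, sameAtom (famUpTo X (i + 1)) x y → x ∈ B → y ∈ B :=
      fun x y hxy hx => sameAtom_trans' hx hxy
    have hAneB : A ≠ B := by
      intro h
      exact (Set.disjoint_left.1 hABdisj hAu (h ▸ hAu))
    have satF : ∀ D ∈ F, ∀ x y : V, sameAtom (famUpTo X (i + 1)) x y → x ∈ D → y ∈ D :=
      fun D hD x y hxy hx => (hF D hD).2 x y (sameAtom_mono' hmono hxy) hx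
    by_cases hcase : ∃ D ∈ F, u ∈ D
    · obtain ⟨D, hDF, huD⟩ := hcase
      have hAD : A ⊆ D := fun z hz => (hF D hDF).2 u z (hAsub z hz) huD
      have hBD : B ⊆ D := fun z hz => (hF D hDF).2 u z (hBsub z hz) huD
      have hAnotin : A ∉ F.erase D := by
        intro hAe
        have hAne : A ≠ D := (Finset.mem_erase.1 hAe).1
        exact Set.disjoint_left.1 (hdisj (Finset.mem_coe.2 (Finset.mem_of_mem_erase hAe))
          (Finset.mem_coe.2 hDF) hAne) hAu (hAD hAu)
      have hBnotin : B ∉ F.erase D := by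
        intro hBe
        have hBne : B ≠ D := (Finset.mem_erase.1 hBe).1
        exact Set.disjoint_left.1 (hdisj (Finset.mem_coe.2 (Finset.mem_of_mem_erase hBe))
          (Finset.mem_coe.2 hDF) hBne) hBv (hBD hBv)
      refine ⟨insert A (insert B (F.erase D)), ?_, ?_, ?_⟩
      · rw [Finset.card_insert_of_notMem (by simp [hAneB, hAnotin]),
          Finset.card_insert_of_notMem hBnotin, Finset.card_erase_of_mem hDF, hcard]
        omega
      · intro a ha b hb hab
        simp only [Finset.coe_insert, Set.mem_insert_iff, Finset.mem_coe] at ha hb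
        have hdE : ∀ E ∈ F.erase D, Disjoint D E := by
          intro E hE
          exact hdisj (Finset.mem_coe.2 hDF) (Finset.mem_coe.2 (Finset.mem_of_mem_erase hE))
            (Ne.symm (Finset.mem_erase.1 hE).1)
        rcases ha with rfl | rfl | ha <;> rcases hb with rfl | rfl | hb
        · exact absurd rfl hab
        · exact hABdisj
        · exact Disjoint.mono_left hAD (hdE _ hb)
        · exact hABdisj.symm
        · exact absurd rfl hab
        · exact Disjoint.mono_left hBD (hdE _ hb)
        · exact (Disjoint.mono_left hAD (hdE _ ha)).symm
        · exact (Disjoint.mono_left hBD (hdE _ ha)).symm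
        · exact hdisj (Finset.mem_coe.2 (Finset.mem_of_mem_erase ha))
            (Finset.mem_coe.2 (Finset.mem_of_mem_erase hb)) hab
      · intro E hE
        simp only [Finset.mem_insert] at hE
        rcases hE with rfl | rfl | hE
        · exact ⟨hu, satA⟩
        · exact ⟨hv, satB⟩
        · exact ⟨(hF E (Finset.mem_of_mem_erase hE)).1, satF E (Finset.mem_of_mem_erase hE)⟩
    · push_neg at hcase
      have hAnotin : A ∉ F := fun h => hcase A h hAu
      refine ⟨insert A F, ?_, ?_, ?_⟩
      · rw [Finset.card_insert_of_notMem hAnotin, hcard]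
      · intro a ha b hb hab
        simp only [Finset.coe_insert, Set.mem_insert_iff, Finset.mem_coe] at ha hb
        have hAdisjF : ∀ E ∈ F, Disjoint A E := by
          intro E hE
          rw [Set.disjoint_left]
          intro z hzA hzE
          exact hcase E hE ((hF E hE).2 z u (sameAtom_symm' (hAsub z hzA)) hzE)
        rcases ha with rfl | ha <;> rcases hb with rfl | hb
        · exact absurd rfl hab
        · exact hAdisjF _ hb
        · exact (hAdisjF _ ha).symm
        · exact hdisj (Finset.mem_coe.2 ha) (Finset.mem_coe.2 hb) hab
      · intro E hE
        simp only [Finset.mem_insert] at hE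
        rcases hE with rfl | hE
        · exact ⟨hu, satA⟩
        · exact ⟨(hF E hE).1, satF E hE⟩

theorem stmt_2 {V : Type*} [Fintype V] (n r k : ℕ)
    (hn : Fintype.card V = n) (hr : 1 ≤ r) (hrn : r ≤ n)
    (X : Fin k → Set V)
    (hsplit : ∀ i : Fin k, ∃ u v : V,
      sameAtom (famUpTo X i) u v ∧
      ¬ sameAtom (famUpTo X ((i : ℕ) + 1)) u v ∧
      r ≤ Set.ncard {z : V | sameAtom (famUpTo X ((i : ℕ) + 1)) u z} ∧
      r ≤ Set.ncard {z : V | sameAtom (famUpTo X ((i : ℕ) + 1)) v z}) :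
    (k : ℝ) ≤ (n : ℝ) / (r : ℝ) - 1 := by
  classical
  subst hn
  obtain ⟨F, hcard, hdisj, hF⟩ := key_family hr hrn X hsplit k le_rfl
  have hcount : (k + 1) * r ≤ Fintype.card V := by
    have h1 : ∀ D ∈ F, r ≤ (Set.toFinite D).toFinset.card := by
      intro D hD
      rw [← Set.ncard_eq_toFinset_card]
      exact (hF D hD).1
    calc (k + 1) * r = F.card • r := by rw [hcard, smul_eq_mul]
      _ ≤ ∑ D ∈ F, (Set.toFinite D).toFinset.card := Finset.card_nsmul_le_sum F _ r h1
      _ = (F.biUnion (fun D => (Set.toFinite D).toFinset)).card := by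
          rw [Finset.card_biUnion]
          intro x hx y hy hxy
          rw [Function.onFun, Finset.disjoint_left]
          intro z hzx hzy
          rw [Set.Finite.mem_toFinset] at hzx hzy
          exact Set.disjoint_left.1
            (hdisj (Finset.mem_coe.2 hx) (Finset.mem_coe.2 hy) hxy) hzx hzy
      _ ≤ Fintype.card V := Finset.card_le_univ _
  have hr' : (0 : ℝ) < r := by exact_mod_cast hr
  rw [le_sub_iff_add_le, le_div_iff₀ hr']
  exact_mod_cast hcount
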